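/- Let u : ℝ² → ℝ be continuous and κ ∈ ℝ. Suppose there are a measurable function U : ℝ → [0,∞) and a constant q < 1/2 with |u(x₁,x₂)| ≤ U(x₂) for all (x₁,x₂) and ∫₀^∞ U(x₂ − s) ds ≤ q for all x₂ ∈ ℝ. Then every bounded continuous solution χ of the modified Jost integral equation at spectral parameter k = iκ satisfies χ(x₁,x₂) > 0 for all (x₁,x₂) ∈ ℝ². -/

import Mathlib

open MeasureTheory Filter Set
open scoped ENNReal

private lemma jost_key_bound (κ x₁ x₂ : ℝ) (u χ : ℝ × ℝ → ℝ) (U : ℝ → ℝ)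
    (hUmeas : Measurable U) (hUnn : ∀ t, 0 ≤ U t)
    (hbound : ∀ a b : ℝ, |u (a, b)| ≤ U b)
    (S : ℝ) (hS0 : 0 ≤ S) (hχS : ∀ p : ℝ × ℝ, |χ p| ≤ S)
    (q : ℝ) (hq0 : 0 ≤ q)
    (hUint : IntegrableOn (fun s => U (x₂ - s)) (Set.Ioi (0 : ℝ)))
    (hUq : (∫ s in Set.Ioi (0 : ℝ), U (x₂ - s)) ≤ q) :
    |∫ y in {y : ℝ × ℝ | y.2 < x₂},
        Real.exp (-(x₁ - y.1 + 2 * κ * (x₂ - y.2)) ^ 2 / (4 * (x₂ - y.2))) /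
          Real.sqrt (x₂ - y.2) * u y * χ y| ≤
      2 * Real.sqrt Real.pi * (q * S) := by
  set A : Set (ℝ × ℝ) := {y : ℝ × ℝ | y.2 < x₂} with hA
  set g : ℝ × ℝ → ℝ := fun y =>
    Real.exp (-(x₁ - y.1 + 2 * κ * (x₂ - y.2)) ^ 2 / (4 * (x₂ - y.2))) /
      Real.sqrt (x₂ - y.2) * u y * χ y with hg
  set H : ℝ × ℝ → ℝ≥0∞ := fun y =>
    ENNReal.ofReal (Real.exp (-(x₁ - y.1 + 2 * κ * (x₂ - y.2)) ^ 2 / (4 * (x₂ - y.2))) /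
      Real.sqrt (x₂ - y.2) * U y.2 * S) with hH
  have hrhs0 : 0 ≤ 2 * Real.sqrt Real.pi * (q * S) := by positivity
  have hHmeas : Measurable H := by
    apply ENNReal.measurable_ofReal.comp
    apply Measurable.mul (Measurable.mul ?_ (hUmeas.comp measurable_snd)) measurable_const
    apply Measurable.div
    · apply Real.measurable_exp.comp
      apply Measurable.div
      · fun_prop
      · fun_prop
    · exact Real.continuous_sqrt.measurable.comp (by fun_prop)
  -- pointwise bound
  have hpt : ∀ y : ℝ × ℝ, ENNReal.ofReal ‖g y‖ ≤ H y := by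
    intro y
    apply ENNReal.ofReal_le_ofReal
    have he : 0 ≤ Real.exp (-(x₁ - y.1 + 2 * κ * (x₂ - y.2)) ^ 2 / (4 * (x₂ - y.2))) /
        Real.sqrt (x₂ - y.2) := div_nonneg (Real.exp_pos _).le (Real.sqrt_nonneg _)
    have h1 : |u y| ≤ U y.2 := by simpa using hbound y.1 y.2
    have h2 : |χ y| ≤ S := hχS y
    calc ‖g y‖ = Real.exp (-(x₁ - y.1 + 2 * κ * (x₂ - y.2)) ^ 2 / (4 * (x₂ - y.2))) /
          Real.sqrt (x₂ - y.2) * |u y| * |χ y| := by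
          rw [Real.norm_eq_abs, hg, abs_mul, abs_mul, abs_of_nonneg he]
      _ ≤ Real.exp (-(x₁ - y.1 + 2 * κ * (x₂ - y.2)) ^ 2 / (4 * (x₂ - y.2))) /
          Real.sqrt (x₂ - y.2) * U y.2 * S := by
          exact mul_le_mul (mul_le_mul_of_nonneg_left h1 he) h2 (abs_nonneg _)
            (mul_nonneg he (hUnn _))
  -- the key lintegral estimate
  have hkey : ∫⁻ y in A, H y ≤ ENNReal.ofReal (2 * Real.sqrt Real.pi * (q * S)) := by
    have hAeq : A = (Set.univ : Set ℝ) ×ˢ Set.Iio x₂ := by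
      ext y; simp [hA]
    have hsplit : ∫⁻ y in A, H y =
        ∫⁻ y₂ in Set.Iio x₂, ∫⁻ y₁ : ℝ, H (y₁, y₂) := by
      rw [hAeq, Measure.volume_eq_prod, ← Measure.prod_restrict, Measure.restrict_univ]
      exact lintegral_prod_symm' H hHmeas
    rw [hsplit]
    have hinner : ∫⁻ y₂ in Set.Iio x₂, ∫⁻ y₁ : ℝ, H (y₁, y₂) =
        ∫⁻ y₂ in Set.Iio x₂, ENNReal.ofReal (2 * Real.sqrt Real.pi * (U y₂ * S)) := by
      apply setLIntegral_congr_fun measurableSet_Iio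
      intro y₂ hy₂
      have ht : 0 < x₂ - y₂ := sub_pos.2 hy₂
      have hst : 0 < Real.sqrt (x₂ - y₂) := Real.sqrt_pos.2 ht
      set b : ℝ := (4 * (x₂ - y₂))⁻¹ with hbdef
      have hb : 0 < b := by rw [hbdef]; positivity
      set a : ℝ := x₁ + 2 * κ * (x₂ - y₂) with hadef
      set C : ℝ := U y₂ * S / Real.sqrt (x₂ - y₂) with hCdef
      have hC0 : 0 ≤ C := div_nonneg (mul_nonneg (hUnn _) hS0) hst.le
      have hrw : ∀ y₁ : ℝ, H (y₁, y₂) =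
          ENNReal.ofReal (Real.exp (-b * (y₁ - a) ^ 2) * C) := by
        intro y₁
        simp only [hH]
        congr 1
        have hexp : -(x₁ - y₁ + 2 * κ * (x₂ - y₂)) ^ 2 / (4 * (x₂ - y₂)) =
            -b * (y₁ - a) ^ 2 := by rw [hbdef, hadef]; ring
        rw [hexp, hCdef]; ring
      simp_rw [hrw]
      have hcv : ∫⁻ y₁ : ℝ, ENNReal.ofReal (Real.exp (-b * (y₁ - a) ^ 2) * C) =
          ∫⁻ z : ℝ, ENNReal.ofReal (Real.exp (-b * z ^ 2) * C) := by
        rw [← MeasurePreserving.lintegral_comp_emb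
          (measurePreserving_add_right (volume : Measure ℝ) a)
          (MeasurableEquiv.addRight a).measurableEmbedding
          (fun y₁ => ENNReal.ofReal (Real.exp (-b * (y₁ - a) ^ 2) * C))]
        simp
      rw [hcv]
      rw [← ofReal_integral_eq_lintegral_ofReal
        ((integrable_exp_neg_mul_sq hb).mul_const C)
        (ae_of_all _ fun z => mul_nonneg (Real.exp_pos _).le hC0)]
      congr 1
      rw [integral_mul_const, integral_gaussian]
      have h4 : Real.pi / b = Real.pi * (4 * (x₂ - y₂)) := by
        rw [hbdef, div_inv_eq_mul]
      rw [h4, Real.sqrt_mul Real.pi_pos.le, Real.sqrt_mul (by norm_num : (0:ℝ) ≤ 4),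
        show Real.sqrt 4 = 2 by
          rw [show (4:ℝ) = 2 ^ 2 by norm_num, Real.sqrt_sq (by norm_num : (0:ℝ) ≤ 2)],
        hCdef]
      field_simp
    rw [hinner]
    have hfac : ∀ y₂ : ℝ, ENNReal.ofReal (2 * Real.sqrt Real.pi * (U y₂ * S)) =
        ENNReal.ofReal (2 * Real.sqrt Real.pi * S) * ENNReal.ofReal (U y₂) := by
      intro y₂
      rw [← ENNReal.ofReal_mul (by positivity)]
      congr 1; ring
    simp_rw [hfac]
    rw [lintegral_const_mul' _ _ ENNReal.ofReal_ne_top]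
    have hU : ∫⁻ y₂ in Set.Iio x₂, ENNReal.ofReal (U y₂) ≤ ENNReal.ofReal q := by
      have hpre : (fun t : ℝ => x₂ - t) ⁻¹' Set.Iio x₂ = Set.Ioi (0 : ℝ) := by
        ext t; simp [sub_lt_self_iff]
      have hmp := (Measure.measurePreserving_sub_left (volume : Measure ℝ) x₂).setLIntegral_comp_preimage
        (measurableSet_Iio (a := x₂)) (f := fun y => ENNReal.ofReal (U y))
        (ENNReal.measurable_ofReal.comp hUmeas)
      rw [← hmp, hpre]
      rw [← ofReal_integral_eq_lintegral_ofReal hUint (ae_of_all _ fun s => hUnn _)]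
      exact ENNReal.ofReal_le_ofReal hUq
    calc ENNReal.ofReal (2 * Real.sqrt Real.pi * S) * ∫⁻ y₂ in Set.Iio x₂, ENNReal.ofReal (U y₂)
        ≤ ENNReal.ofReal (2 * Real.sqrt Real.pi * S) * ENNReal.ofReal q :=
          mul_le_mul_right hU _
      _ = ENNReal.ofReal (2 * Real.sqrt Real.pi * (q * S)) := by
          rw [← ENNReal.ofReal_mul (by positivity)]
          congr 1; ring
  calc |∫ y in A, g y| = ‖∫ y in A, g y‖ := (Real.norm_eq_abs _).symm
    _ ≤ (∫⁻ y in A, ENNReal.ofReal ‖g y‖).toReal := norm_integral_le_lintegral_norm _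
    _ ≤ 2 * Real.sqrt Real.pi * (q * S) := by
        apply ENNReal.toReal_le_of_le_ofReal hrhs0
        exact le_trans (lintegral_mono hpt) hkey

theorem jost_solution_positive
    (u : ℝ × ℝ → ℝ) (hu : Continuous u) (κ : ℝ)
    (U : ℝ → ℝ) (hUmeas : Measurable U) (hUnn : ∀ t, 0 ≤ U t)
    (q : ℝ) (hq : q < 1 / 2)
    (hbound : ∀ x₁ x₂ : ℝ, |u (x₁, x₂)| ≤ U x₂)
    (hUint : ∀ x₂ : ℝ, IntegrableOn (fun s => U (x₂ - s)) (Set.Ioi (0 : ℝ)))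
    (hUq : ∀ x₂ : ℝ, (∫ s in Set.Ioi (0 : ℝ), U (x₂ - s)) ≤ q)
    (χ : ℝ × ℝ → ℝ) (hχcont : Continuous χ) (M : ℝ) (hχbdd : ∀ p : ℝ × ℝ, |χ p| ≤ M)
    (hint : ∀ x₁ x₂ : ℝ, IntegrableOn
      (fun y : ℝ × ℝ =>
        Real.exp (-(x₁ - y.1 + 2 * κ * (x₂ - y.2)) ^ 2 / (4 * (x₂ - y.2))) /
          Real.sqrt (x₂ - y.2) * u y * χ y)
      {y : ℝ × ℝ | y.2 < x₂})
    (heq : ∀ x₁ x₂ : ℝ, χ (x₁, x₂) =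
      1 - (1 / (2 * Real.sqrt Real.pi)) *
        ∫ y in {y : ℝ × ℝ | y.2 < x₂},
          Real.exp (-(x₁ - y.1 + 2 * κ * (x₂ - y.2)) ^ 2 / (4 * (x₂ - y.2))) /
            Real.sqrt (x₂ - y.2) * u y * χ y) :
    ∀ x : ℝ × ℝ, 0 < χ x := by
  have hq0 : 0 ≤ q :=
    le_trans (setIntegral_nonneg measurableSet_Ioi fun s _ => hUnn _) (hUq 0)
  set S : ℝ := ⨆ p : ℝ × ℝ, |χ p| with hS
  have hbddA : BddAbove (Set.range fun p : ℝ × ℝ => |χ p|) := by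
    refine ⟨M, ?_⟩; rintro _ ⟨p, rfl⟩; exact hχbdd p
  have hle : ∀ p : ℝ × ℝ, |χ p| ≤ S := fun p => le_ciSup hbddA p
  have hS0 : 0 ≤ S := (abs_nonneg _).trans (hle (0, 0))
  have hπ : 0 < Real.sqrt Real.pi := Real.sqrt_pos.2 Real.pi_pos
  have key : ∀ x₁ x₂ : ℝ,
      |∫ y in {y : ℝ × ℝ | y.2 < x₂},
        Real.exp (-(x₁ - y.1 + 2 * κ * (x₂ - y.2)) ^ 2 / (4 * (x₂ - y.2))) /
          Real.sqrt (x₂ - y.2) * u y * χ y| ≤ 2 * Real.sqrt Real.pi * (q * S) :=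
    fun x₁ x₂ => jost_key_bound κ x₁ x₂ u χ U hUmeas hUnn
      (fun a b => hbound a b) S hS0 hle q hq0 (hUint x₂) (hUq x₂)
  have hbnd : ∀ p : ℝ × ℝ, 1 - q * S ≤ χ p ∧ χ p ≤ 1 + q * S := by
    intro p
    have hp := heq p.1 p.2
    rw [Prod.mk.eta] at hp
    set I : ℝ := ∫ y in {y : ℝ × ℝ | y.2 < p.2},
        Real.exp (-(p.1 - y.1 + 2 * κ * (p.2 - y.2)) ^ 2 / (4 * (p.2 - y.2))) /
          Real.sqrt (p.2 - y.2) * u y * χ y with hI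
    have hIle : |I| ≤ 2 * Real.sqrt Real.pi * (q * S) := key p.1 p.2
    have hc0 : 0 < 1 / (2 * Real.sqrt Real.pi) := by positivity
    have habs : |(1 / (2 * Real.sqrt Real.pi)) * I| ≤ q * S := by
      rw [abs_mul, abs_of_pos hc0]
      calc 1 / (2 * Real.sqrt Real.pi) * |I|
          ≤ 1 / (2 * Real.sqrt Real.pi) * (2 * Real.sqrt Real.pi * (q * S)) := by
            exact mul_le_mul_of_nonneg_left hIle hc0.le
        _ = q * S := by field_simp
    have h1 := abs_le.1 habs
    constructor <;> [linarith [hp, h1.2]; linarith [hp, h1.1]]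
  have hSle : S ≤ 1 + q * S := by
    apply ciSup_le
    intro p
    have h := hbnd p
    have : 0 ≤ q * S := mul_nonneg hq0 hS0
    exact abs_le.2 ⟨by linarith [h.1], h.2⟩
  have hqS : q * S < 1 := by
    nlinarith [mul_le_mul_of_nonneg_left hSle hq0, mul_nonneg hq0 hS0]
  intro x
  have h := (hbnd x).1
  linarith
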